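/- Let φ be a growth function, q(φ) and i(φ) its critical Muckenhoupt and lower-type indices, ε ∈ (n(q(φ)/i(φ)−1), ∞), and B₀ = B(x₀, δ) a ball. Then there is a constant C > 0 such that for all f ∈ BMO_φ(ℝⁿ), ∫_{ℝⁿ} δ^ε |f(x) − f_{B₀}| / (δ^{n+ε} + |x − x₀|^{n+ε}) dx ≤ C (‖χ_{B₀}‖_{L^φ} / |B₀|) ‖f‖_{BMO_φ}. -/

import Mathlib

open MeasureTheory Metric Filter ENNReal

noncomputable section

/-- `φ` is of uniformly lower type `p`. -/
def UnifLowerType {n : ℕ} (p : ℝ) (φ : EuclideanSpace ℝ (Fin n) → ℝ → ℝ) : Prop :=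
  ∃ C : ℝ, 0 < C ∧ ∀ (x : EuclideanSpace ℝ (Fin n)) (s t : ℝ), 0 ≤ s → s ≤ 1 → 0 ≤ t →
    φ x (s * t) ≤ C * s ^ p * φ x t

/-- `φ` is of uniformly upper type 1. -/
def UnifUpperType1 {n : ℕ} (φ : EuclideanSpace ℝ (Fin n) → ℝ → ℝ) : Prop :=
  ∃ C : ℝ, 0 < C ∧ ∀ (x : EuclideanSpace ℝ (Fin n)) (s t : ℝ), 1 ≤ s → 0 ≤ t →
    φ x (s * t) ≤ C * s * φ x t

/-- The uniform Muckenhoupt condition `𝔸_q(ℝⁿ)`. -/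
def UniformMuckenhoupt {n : ℕ} (q : ℝ) (φ : EuclideanSpace ℝ (Fin n) → ℝ → ℝ) : Prop :=
  if q = 1 then
    ∃ C : ℝ≥0∞, C ≠ ⊤ ∧ ∀ t : ℝ, 0 ≤ t → ∀ (x : EuclideanSpace ℝ (Fin n)) (r : ℝ), 0 < r →
      (∫⁻ y in ball x r, ENNReal.ofReal (φ y t)) *
        essSup (fun y => ENNReal.ofReal ((φ y t)⁻¹)) (volume.restrict (ball x r))
        ≤ C * volume (ball x r)
  else
    ∃ C : ℝ≥0∞, C ≠ ⊤ ∧ ∀ t : ℝ, 0 ≤ t → ∀ (x : EuclideanSpace ℝ (Fin n)) (r : ℝ), 0 < r →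
      (∫⁻ y in ball x r, ENNReal.ofReal (φ y t)) *
        ((∫⁻ y in ball x r, ENNReal.ofReal (φ y t) ^ (-(1 / (q - 1)))) ^ (q - 1))
        ≤ C * volume (ball x r) ^ q

/-- A growth function in the sense of Ky: `φ(x,·)` is an Orlicz function, `φ(·,t)` is
measurable, `φ` is of uniformly lower type `p` for some `p ∈ (0,1]` and of uniformly
upper type 1, and `φ ∈ 𝔸_∞(ℝⁿ)`. -/
def IsGrowthFunction {n : ℕ} (φ : EuclideanSpace ℝ (Fin n) → ℝ → ℝ) : Prop :=
  (∀ x, MonotoneOn (φ x) (Set.Ici 0)) ∧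
  (∀ x, φ x 0 = 0) ∧
  (∀ x t, 0 < t → 0 < φ x t) ∧
  (∀ x, Tendsto (φ x) atTop atTop) ∧
  (∀ t, Measurable fun x => φ x t) ∧
  (∃ p : ℝ, 0 < p ∧ p ≤ 1 ∧ UnifLowerType p φ) ∧
  UnifUpperType1 φ ∧
  (∃ q : ℝ, 1 ≤ q ∧ UniformMuckenhoupt q φ)

/-- The Luxembourg "norm" `‖χ_B‖_{L^φ}` of the characteristic function of a set `B`. -/
def luxNorm {n : ℕ} (φ : EuclideanSpace ℝ (Fin n) → ℝ → ℝ) (B : Set (EuclideanSpace ℝ (Fin n))) :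
    ℝ≥0∞ :=
  sInf {lam : ℝ≥0∞ | 0 < lam ∧ ∫⁻ x in B, ENNReal.ofReal (φ x lam⁻¹.toReal) ≤ 1}

/-- The Lusin square (area) functional `𝒜` over cones of aperture 1. -/
def sqFn {n : ℕ} (f : EuclideanSpace ℝ (Fin n) × ℝ → ℝ) (x : EuclideanSpace ℝ (Fin n)) : ℝ≥0∞ :=
  (∫⁻ p in {p : EuclideanSpace ℝ (Fin n) × ℝ | 0 < p.2 ∧ dist x p.1 < p.2},
      ENNReal.ofReal (f p ^ 2 / p.2 ^ (n + 1))) ^ ((1 : ℝ) / 2)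


/-- The critical Muckenhoupt index `q(φ)`. -/
def qIndex {n : ℕ} (φ : EuclideanSpace ℝ (Fin n) → ℝ → ℝ) : ℝ :=
  sInf {q : ℝ | 1 ≤ q ∧ UniformMuckenhoupt q φ}

/-- The critical uniformly-lower-type index `i(φ)`. -/
def iIndex {n : ℕ} (φ : EuclideanSpace ℝ (Fin n) → ℝ → ℝ) : ℝ :=
  sSup {p : ℝ | 0 < p ∧ UnifLowerType p φ}

/-- The average of `f` over the ball `B(c,r)`. -/
def ballAvg {n : ℕ} (f : EuclideanSpace ℝ (Fin n) → ℝ) (c : EuclideanSpace ℝ (Fin n))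
    (r : ℝ) : ℝ :=
  (volume (ball c r)).toReal⁻¹ * ∫ y in ball c r, f y

namespace Stmt18

variable {n : ℕ}

lemma lowerType_le_one {φ : EuclideanSpace ℝ (Fin n) → ℝ → ℝ}
    (hpos : ∀ x t, 0 < t → 0 < φ x t) (hup : UnifUpperType1 φ)
    {p : ℝ} (hp : UnifLowerType p φ) : p ≤ 1 := by
  by_contra hgt
  push_neg at hgt
  obtain ⟨Cp, hCp, hlow⟩ := hp
  obtain ⟨Cu, hCu, hupp⟩ := hup
  set x : EuclideanSpace ℝ (Fin n) := 0 with hx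
  set M : ℝ := Cu * Cp with hM
  have hM0 : 0 < M := mul_pos hCu hCp
  have hMp : (0:ℝ) < M + 1 := by linarith
  set s : ℝ := min (1/2) ((M + 1) ^ (-(1/(p-1)))) with hs_def
  have hs0 : 0 < s := lt_min (by norm_num) (Real.rpow_pos_of_pos hMp _)
  have hs1 : s ≤ 1 := le_trans (min_le_left _ _) (by norm_num)
  have hsinv : 1 ≤ s⁻¹ := by
    nlinarith [mul_le_mul_of_nonneg_right hs1 (inv_pos.mpr hs0).le, mul_inv_cancel₀ hs0.ne']
  have hA : 0 < φ x 1 := hpos x 1 one_pos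
  have h1 : φ x 1 ≤ Cu * s⁻¹ * φ x s := by
    have := hupp x s⁻¹ s hsinv hs0.le
    rwa [inv_mul_cancel₀ hs0.ne'] at this
  have h2 : φ x s ≤ Cp * s ^ p * φ x 1 := by
    have := hlow x s 1 hs0.le hs1 zero_le_one
    rwa [mul_one] at this
  have hB : φ x 1 ≤ (Cu * s⁻¹ * (Cp * s ^ p)) * φ x 1 := by
    calc φ x 1 ≤ Cu * s⁻¹ * φ x s := h1
    _ ≤ Cu * s⁻¹ * (Cp * s ^ p * φ x 1) := by
        apply mul_le_mul_of_nonneg_left h2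
        positivity
    _ = (Cu * s⁻¹ * (Cp * s ^ p)) * φ x 1 := by ring
  have hone : 1 ≤ Cu * s⁻¹ * (Cp * s ^ p) := by
    exact le_of_mul_le_mul_right (by linarith [hB]) hA
  have hsp : s ^ p = s ^ (p - 1) * s := by
    rw [← Real.rpow_add_one hs0.ne' (p-1)]
    norm_num
  have hspm : s ^ (p - 1) ≤ (M + 1)⁻¹ := by
    have hsle : s ≤ (M + 1) ^ (-(1/(p-1))) := min_le_right _ _
    have := Real.rpow_le_rpow hs0.le hsle (by linarith : (0:ℝ) ≤ p - 1)
    calc s ^ (p-1) ≤ ((M + 1) ^ (-(1/(p-1)))) ^ (p-1) := this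
    _ = (M + 1) ^ (-(1/(p-1)) * (p-1)) := (Real.rpow_mul hMp.le _ _).symm
    _ = (M + 1) ^ (-1 : ℝ) := by
        congr 1
        have hpne : p - 1 ≠ 0 := by linarith
        field_simp
    _ = (M + 1)⁻¹ := by
        rw [Real.rpow_neg_one]
  have hBval : Cu * s⁻¹ * (Cp * s ^ p) = M * s ^ (p - 1) := by
    rw [hsp, hM]
    field_simp
  rw [hBval] at hone
  have : M * s ^ (p-1) ≤ M * (M+1)⁻¹ := by
    apply mul_le_mul_of_nonneg_left hspm hM0.le
  have hlt : M * (M+1)⁻¹ < 1 := by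
    rw [← div_eq_mul_inv, div_lt_one hMp]
    linarith
  linarith

lemma choose_exponents {φ : EuclideanSpace ℝ (Fin n) → ℝ → ℝ} (hφ : IsGrowthFunction φ)
    {ε : ℝ} (hε : (n:ℝ) * (qIndex φ / iIndex φ - 1) < ε) :
    0 < ε ∧ ∃ q₀ p₀ : ℝ, 1 ≤ q₀ ∧ UniformMuckenhoupt q₀ φ ∧ 0 < p₀ ∧ p₀ ≤ 1 ∧
      UnifLowerType p₀ φ ∧ (n:ℝ) * q₀ / p₀ < (n:ℝ) + ε := by
  obtain ⟨hmono, hzero, hpos, htop, hmeas, ⟨p, hp0, hp1, hplow⟩, hup, ⟨q, hq1, hqA⟩⟩ := hφ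
  set Sq := {q : ℝ | 1 ≤ q ∧ UniformMuckenhoupt q φ} with hSq
  have hSqne : Sq.Nonempty := ⟨q, hq1, hqA⟩
  set Sp := {p : ℝ | 0 < p ∧ UnifLowerType p φ} with hSp
  have hSpne : Sp.Nonempty := ⟨p, hp0, hplow⟩
  have hSpbdd : BddAbove Sp := ⟨1, fun a ha => lowerType_le_one hpos hup ha.2⟩
  set Q := qIndex φ with hQdef
  set I := iIndex φ with hIdef
  have hQ1 : 1 ≤ Q := le_csInf hSqne (fun a ha => ha.1)
  have hI0 : 0 < I := lt_of_lt_of_le hp0 (le_csSup hSpbdd ⟨hp0, hplow⟩)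
  have hI1 : I ≤ 1 := csSup_le hSpne (fun a ha => lowerType_le_one hpos hup ha.2)
  have hexp : (n:ℝ) * (Q / I - 1) = (n:ℝ) * Q / I - n := by ring
  have hε'' : (n:ℝ) * Q / I < (n:ℝ) + ε := by rw [hexp] at hε; linarith
  have hQI : 1 ≤ Q / I := (one_le_div hI0).mpr (hI1.trans hQ1)
  have hε0 : 0 < ε := by
    have h1 : (0:ℝ) ≤ (n:ℝ) * (Q / I - 1) := mul_nonneg (Nat.cast_nonneg n) (by linarith)
    linarith
  refine ⟨hε0, ?_⟩
  rcases Nat.eq_zero_or_pos n with hn0 | hn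
  · exact ⟨q, p, hq1, hqA, hp0, lowerType_le_one hpos hup hplow, hplow,
      by simp [hn0]; linarith⟩
  · have hn0 : (0:ℝ) < (n:ℝ) := Nat.cast_pos.mpr hn
    set T : ℝ := ((n:ℝ) + ε) / n with hT
    have hT0 : 0 < T := div_pos (by linarith) hn0
    have hQIT : Q / I < T := by
      rw [lt_div_iff₀ hn0]
      calc Q / I * n = (n:ℝ) * Q / I := by ring
      _ < (n:ℝ) + ε := hε''
    have hQT : Q / T < I := by
      rw [div_lt_iff₀ hT0]
      rw [div_lt_iff₀ hI0] at hQIT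
      linarith [hQIT]
    obtain ⟨p₀, hp₀S, hp₀gt⟩ := exists_lt_of_lt_csSup hSpne hQT
    have hp₀0 : 0 < p₀ := hp₀S.1
    have hQp : Q < p₀ * T := by
      rw [div_lt_iff₀ hT0] at hp₀gt
      linarith
    obtain ⟨q₀, hq₀S, hq₀lt⟩ := exists_lt_of_csInf_lt hSqne hQp
    refine ⟨q₀, p₀, hq₀S.1, hq₀S.2, hp₀0, lowerType_le_one hpos hup hp₀S.2, hp₀S.2, ?_⟩
    have hq₀p₀ : q₀ / p₀ < T := by
      rw [div_lt_iff₀ hp₀0]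
      linarith
    calc (n:ℝ) * q₀ / p₀ = (n:ℝ) * (q₀ / p₀) := by ring
    _ < (n:ℝ) * T := by exact mul_lt_mul_of_pos_left hq₀p₀ hn0
    _ = (n:ℝ) + ε := by rw [hT]; field_simp

lemma ball_scale (x : EuclideanSpace ℝ (Fin n)) {r c : ℝ} (hr : 0 < r) (hc : 0 < c) :
    volume (ball x (c * r)) = ENNReal.ofReal (c ^ n) * volume (ball x r) := by
  rcases Nat.eq_zero_or_pos n with h0 | hn
  · subst h0
    have hb : ∀ s : ℝ, 0 < s → ball x s = Set.univ := by
      intro s hs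
      ext y
      simp [mem_ball, Subsingleton.elim y x, hs]
    rw [hb _ hr, hb _ (mul_pos hc hr)]
    simp
  · have : Nonempty (Fin n) := ⟨⟨0, hn⟩⟩
    rw [EuclideanSpace.volume_ball, EuclideanSpace.volume_ball, Fintype.card_fin,
      ENNReal.ofReal_mul hc.le, mul_pow, ← ENNReal.ofReal_pow hc.le, mul_assoc]

lemma vol_pos (x : EuclideanSpace ℝ (Fin n)) {r : ℝ} (hr : 0 < r) :
    0 < volume (ball x r) := measure_ball_pos _ _ hr

lemma vol_ne_top (x : EuclideanSpace ℝ (Fin n)) (r : ℝ) :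
    volume (ball x r) ≠ ⊤ := measure_ball_lt_top.ne


lemma cancel_vol {C X J V : ℝ≥0∞} (hV0 : V ≠ 0) (hVt : V ≠ ⊤) :
    (C * (X * V)) * J / V = C * X * J := by
  have : (C * (X * V)) * J = (C * X * J) * V := by ring
  rw [this, mul_div_assoc, ENNReal.div_self hV0 hVt, mul_one]

lemma le_ofReal_succ {C : ℝ≥0∞} (h : C ≠ ⊤) : C ≤ ENNReal.ofReal (C.toReal + 1) := by
  conv_lhs => rw [← ENNReal.ofReal_toReal h]
  exact ENNReal.ofReal_le_ofReal (by linarith)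

lemma final_step {C : ℝ≥0∞} (hCtop : C ≠ ⊤) {u v : ℝ} (hu : 0 ≤ u) (huv : u ≤ v) (J : ℝ≥0∞) :
    C * ENNReal.ofReal u * J ≤ ENNReal.ofReal ((C.toReal + 1) * v) * J := by
  refine mul_le_mul_left ?_ _
  rw [ENNReal.ofReal_mul (by positivity)]
  exact mul_le_mul' (le_ofReal_succ hCtop) (ENNReal.ofReal_le_ofReal huv)

lemma pow_le_rpow_mul {R r : ℝ} (hr : 0 < r) (hrR : r ≤ R) {q : ℝ} (hq : 1 ≤ q) :
    ((R/r) ^ n : ℝ) ≤ (R / r) ^ ((n:ℝ) * q) := by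
  have h1 : (1:ℝ) ≤ R / r := (one_le_div hr).mpr hrR
  rw [← Real.rpow_natCast (R/r) n]
  exact Real.rpow_le_rpow_of_exponent_le h1 (le_mul_of_one_le_right (Nat.cast_nonneg n) hq)

lemma doubling {φ : EuclideanSpace ℝ (Fin n) → ℝ → ℝ} {q : ℝ} (hq1 : 1 ≤ q)
    (hA : UniformMuckenhoupt q φ)
    (hm : ∀ t, Measurable fun y : EuclideanSpace ℝ (Fin n) => φ y t)
    (hpos : ∀ y t, 0 < t → 0 < φ y t) :
    ∃ C : ℝ, 0 < C ∧ ∀ t : ℝ, 0 < t → ∀ (x : EuclideanSpace ℝ (Fin n)) (r R : ℝ),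
      0 < r → r ≤ R →
      (∫⁻ y in ball x R, ENNReal.ofReal (φ y t)) ≤
        ENNReal.ofReal (C * (R / r) ^ ((n:ℝ) * q)) * ∫⁻ y in ball x r, ENNReal.ofReal (φ y t) := by
  rcases eq_or_lt_of_le hq1 with hq | hq
  · -- q = 1
    rw [UniformMuckenhoupt, if_pos hq.symm] at hA
    obtain ⟨C, hCtop, hC⟩ := hA
    refine ⟨C.toReal + 1, by positivity, fun t ht x r R hr hrR => ?_⟩
    set Φ : EuclideanSpace ℝ (Fin n) → ℝ≥0∞ := fun y => ENNReal.ofReal (φ y t) with hΦ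
    have hR0 : 0 < R := lt_of_lt_of_le hr hrR
    have hball : ball x r ⊆ ball x R := ball_subset_ball hrR
    set e := essSup (fun y => ENNReal.ofReal ((φ y t)⁻¹)) (volume.restrict (ball x R)) with he
    have key : volume (ball x r) ≤ e * ∫⁻ y in ball x r, Φ y := by
      have h1 : ∀ᵐ y ∂(volume.restrict (ball x R)),
          ENNReal.ofReal ((φ y t)⁻¹) ≤ e := ENNReal.ae_le_essSup _
      have h2 : ∀ᵐ y ∂(volume.restrict (ball x r)),
          ENNReal.ofReal ((φ y t)⁻¹) ≤ e :=
        Filter.Eventually.filter_mono (ae_mono (Measure.restrict_mono hball le_rfl)) h1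
      have h3 : ∀ᵐ y ∂(volume.restrict (ball x r)), (1:ℝ≥0∞) ≤ Φ y * e := by
        filter_upwards [h2] with y hy
        have hφy : 0 < φ y t := hpos y t ht
        have hone : Φ y * ENNReal.ofReal ((φ y t)⁻¹) = 1 := by
          rw [hΦ, ← ENNReal.ofReal_mul hφy.le, mul_inv_cancel₀ hφy.ne', ENNReal.ofReal_one]
        calc (1:ℝ≥0∞) = Φ y * ENNReal.ofReal ((φ y t)⁻¹) := hone.symm
        _ ≤ Φ y * e := mul_le_mul_right hy _
      calc volume (ball x r) = ∫⁻ _ in ball x r, (1:ℝ≥0∞) := by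
            rw [setLIntegral_const, one_mul]
      _ ≤ ∫⁻ y in ball x r, Φ y * e := lintegral_mono_ae h3
      _ = (∫⁻ y in ball x r, Φ y) * e :=
            lintegral_mul_const'' _ ((ENNReal.measurable_ofReal.comp (hm t)).aemeasurable)
      _ = e * ∫⁻ y in ball x r, Φ y := mul_comm _ _
    have main : (∫⁻ y in ball x R, Φ y) * volume (ball x r) ≤
        (C * volume (ball x R)) * ∫⁻ y in ball x r, Φ y := by
      calc (∫⁻ y in ball x R, Φ y) * volume (ball x r)
          ≤ (∫⁻ y in ball x R, Φ y) * (e * ∫⁻ y in ball x r, Φ y) :=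
            mul_le_mul_right key _
      _ = ((∫⁻ y in ball x R, Φ y) * e) * ∫⁻ y in ball x r, Φ y := by ring
      _ ≤ (C * volume (ball x R)) * ∫⁻ y in ball x r, Φ y :=
            mul_le_mul_left (hC t ht.le x R hR0) _
    have hvr0 : volume (ball x r) ≠ 0 := (vol_pos x hr).ne'
    have hvrt : volume (ball x r) ≠ ⊤ := vol_ne_top x r
    have hdiv : (∫⁻ y in ball x R, Φ y) ≤
        (C * volume (ball x R)) * (∫⁻ y in ball x r, Φ y) / volume (ball x r) := by
      rw [ENNReal.le_div_iff_mul_le (Or.inl hvr0) (Or.inl hvrt)]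
      exact main
    have hvR : volume (ball x R) = ENNReal.ofReal ((R/r)^n) * volume (ball x r) := by
      have hRrr : R = (R/r) * r := by field_simp
      conv_lhs => rw [hRrr]
      exact ball_scale x hr (div_pos hR0 hr)
    calc (∫⁻ y in ball x R, Φ y)
        ≤ (C * volume (ball x R)) * (∫⁻ y in ball x r, Φ y) / volume (ball x r) := hdiv
    _ = C * ENNReal.ofReal ((R/r)^n) * (∫⁻ y in ball x r, Φ y) := by
        rw [hvR]; exact cancel_vol hvr0 hvrt
    _ ≤ ENNReal.ofReal ((C.toReal + 1) * (R / r) ^ ((n:ℝ) * q)) * ∫⁻ y in ball x r, Φ y :=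
        final_step hCtop (by positivity) (pow_le_rpow_mul hr hrR hq1) _
  · -- 1 < q
    rw [UniformMuckenhoupt, if_neg hq.ne'] at hA
    obtain ⟨C, hCtop, hC⟩ := hA
    refine ⟨C.toReal + 1, by positivity, fun t ht x r R hr hrR => ?_⟩
    set Φ : EuclideanSpace ℝ (Fin n) → ℝ≥0∞ := fun y => ENNReal.ofReal (φ y t) with hΦ
    have hR0 : 0 < R := lt_of_lt_of_le hr hrR
    have hball : ball x r ⊆ ball x R := ball_subset_ball hrR
    have hq0 : (0:ℝ) < q := lt_trans one_pos hq
    have hq1' : q - 1 ≠ 0 := by linarith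
    set q' : ℝ := q / (q - 1) with hq'def
    have hcj : q.HolderConjugate q' := Real.HolderConjugate.conjExponent hq
    have hq'0 : (0:ℝ) < q' := hcj.symm.pos
    have hΦ0 : ∀ y, Φ y ≠ 0 := fun y => by
      simp only [hΦ, ne_eq, ENNReal.ofReal_eq_zero, not_le]; exact hpos y t ht
    have hΦt : ∀ y, Φ y ≠ ⊤ := fun y => ENNReal.ofReal_ne_top
    have hmeasΦ : Measurable Φ := ENNReal.measurable_ofReal.comp (hm t)
    set J := ∫⁻ y in ball x R, Φ y ^ (-(1/(q-1))) with hJ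
    -- Hölder
    have holder : volume (ball x r) ≤
        (∫⁻ y in ball x r, Φ y) ^ (1/q) * J ^ (1/q') := by
      have h0 := ENNReal.lintegral_mul_le_Lp_mul_Lq (volume.restrict (ball x r)) hcj
        (hmeasΦ.pow_const (1/q)).aemeasurable (hmeasΦ.pow_const (-(1/q))).aemeasurable
      have hfg : ∀ y : EuclideanSpace ℝ (Fin n),
          ((fun y => Φ y ^ (1/q)) * fun y => Φ y ^ (-(1/q))) y = 1 := by
        intro y
        simp only [Pi.mul_apply]
        rw [← ENNReal.rpow_add _ _ (hΦ0 y) (hΦt y)]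
        simp
      rw [lintegral_congr hfg] at h0
      simp only [lintegral_one, Measure.restrict_apply_univ] at h0
      have e1 : ∀ y : EuclideanSpace ℝ (Fin n), (Φ y ^ (1/q)) ^ q = Φ y := by
        intro y
        rw [← ENNReal.rpow_mul]
        rw [one_div, inv_mul_cancel₀ hq0.ne', ENNReal.rpow_one]
      have e2 : ∀ y : EuclideanSpace ℝ (Fin n), (Φ y ^ (-(1/q))) ^ q' = Φ y ^ (-(1/(q-1))) := by
        intro y
        rw [← ENNReal.rpow_mul]
        congr 1
        rw [hq'def]
        field_simp
      simp only [e1, e2] at h0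
      refine le_trans h0 ?_
      refine mul_le_mul_right ?_ _
      refine ENNReal.rpow_le_rpow ?_ (by positivity)
      exact lintegral_mono' (Measure.restrict_mono hball le_rfl) le_rfl
    -- raise to power q
    have hpowq : volume (ball x r) ^ q ≤ (∫⁻ y in ball x r, Φ y) * J ^ (q-1) := by
      have h1 := ENNReal.rpow_le_rpow holder hq0.le
      rw [ENNReal.mul_rpow_of_nonneg _ _ hq0.le, ← ENNReal.rpow_mul, ← ENNReal.rpow_mul] at h1
      rw [one_div, inv_mul_cancel₀ hq0.ne', ENNReal.rpow_one] at h1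
      have : 1/q' * q = q - 1 := by rw [hq'def]; field_simp; try ring
      rwa [this] at h1
    have main : (∫⁻ y in ball x R, Φ y) * volume (ball x r) ^ q ≤
        (C * volume (ball x R) ^ q) * ∫⁻ y in ball x r, Φ y := by
      calc (∫⁻ y in ball x R, Φ y) * volume (ball x r) ^ q
          ≤ (∫⁻ y in ball x R, Φ y) * ((∫⁻ y in ball x r, Φ y) * J ^ (q-1)) :=
            mul_le_mul_right hpowq _
      _ = ((∫⁻ y in ball x R, Φ y) * J ^ (q-1)) * ∫⁻ y in ball x r, Φ y := by ring
      _ ≤ (C * volume (ball x R) ^ q) * ∫⁻ y in ball x r, Φ y :=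
            mul_le_mul_left (hC t ht.le x R hR0) _
    have hvr0 : (volume (ball x r)) ^ q ≠ 0 :=
      (ENNReal.rpow_pos (vol_pos x hr) (vol_ne_top x r)).ne'
    have hvrt : (volume (ball x r)) ^ q ≠ ⊤ :=
      ENNReal.rpow_ne_top_of_nonneg hq0.le (vol_ne_top x r)
    have hdiv : (∫⁻ y in ball x R, Φ y) ≤
        (C * volume (ball x R) ^ q) * (∫⁻ y in ball x r, Φ y) / volume (ball x r) ^ q := by
      rw [ENNReal.le_div_iff_mul_le (Or.inl hvr0) (Or.inl hvrt)]
      exact main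
    have hvR : volume (ball x R) ^ q =
        ENNReal.ofReal (((R/r):ℝ) ^ ((n:ℝ) * q)) * volume (ball x r) ^ q := by
      have hRrr : R = (R/r) * r := by field_simp
      have hsc : volume (ball x R) = ENNReal.ofReal ((R/r)^n) * volume (ball x r) := by
        conv_lhs => rw [hRrr]
        exact ball_scale x hr (div_pos hR0 hr)
      rw [hsc, ENNReal.mul_rpow_of_nonneg _ _ hq0.le]
      congr 1
      rw [ENNReal.ofReal_rpow_of_pos (by positivity)]
      congr 1
      rw [← Real.rpow_natCast (R/r) n, ← Real.rpow_mul (by positivity)]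
    calc (∫⁻ y in ball x R, Φ y)
        ≤ (C * volume (ball x R) ^ q) * (∫⁻ y in ball x r, Φ y) / volume (ball x r) ^ q := hdiv
    _ = C * ENNReal.ofReal (((R/r):ℝ) ^ ((n:ℝ) * q)) * (∫⁻ y in ball x r, Φ y) := by
        rw [hvR]; exact cancel_vol hvr0 hvrt
    _ ≤ ENNReal.ofReal ((C.toReal + 1) * (R / r) ^ ((n:ℝ) * q)) * ∫⁻ y in ball x r, Φ y :=
        final_step hCtop (by positivity) le_rfl _

lemma lux_mono {φ : EuclideanSpace ℝ (Fin n) → ℝ → ℝ}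
    {B B' : Set (EuclideanSpace ℝ (Fin n))} (h : B ⊆ B') :
    luxNorm φ B ≤ luxNorm φ B' := by
  apply sInf_le_sInf
  rintro lam ⟨h0, hint⟩
  exact ⟨h0, le_trans (lintegral_mono' (Measure.restrict_mono h le_rfl) le_rfl) hint⟩

lemma lux_pos {φ : EuclideanSpace ℝ (Fin n) → ℝ → ℝ}
    (hmono : ∀ y, MonotoneOn (φ y) (Set.Ici 0))
    (htop : ∀ y, Tendsto (φ y) atTop atTop)
    (hm : ∀ t, Measurable fun y : EuclideanSpace ℝ (Fin n) => φ y t)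
    (x : EuclideanSpace ℝ (Fin n)) {r : ℝ} (hr : 0 < r) :
    0 < luxNorm φ (ball x r) := by
  rw [pos_iff_ne_zero]
  intro h0
  have hseq : ∀ k : ℕ, (∫⁻ y in ball x r, ENNReal.ofReal (φ y k)) ≤ 1 := by
    intro k
    have hlt : luxNorm φ (ball x r) < (((k:ℝ≥0∞)) + 1)⁻¹ := by
      rw [h0]
      exact ENNReal.inv_pos.mpr (by simp)
    obtain ⟨lam, ⟨hlam0, hlamint⟩, hlamlt⟩ := sInf_lt_iff.mp hlt
    have hinv : ((k:ℝ≥0∞)) + 1 < lam⁻¹ := ENNReal.lt_inv_iff_lt_inv.mp hlamlt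
    have hinvt : lam⁻¹ ≠ ⊤ := ENNReal.inv_ne_top.mpr hlam0.ne'
    have hk : (k:ℝ) ≤ lam⁻¹.toReal := by
      have h1 := ENNReal.toReal_mono hinvt hinv.le
      rw [ENNReal.toReal_add (by simp) (by simp)] at h1
      simp at h1
      rw [ENNReal.toReal_inv]
      linarith
    have hmon : ∀ y, φ y (k:ℝ) ≤ φ y (lam⁻¹.toReal) := fun y =>
      hmono y (Set.mem_Ici.mpr (Nat.cast_nonneg k))
        (Set.mem_Ici.mpr (le_trans (Nat.cast_nonneg k) hk)) hk
    calc (∫⁻ y in ball x r, ENNReal.ofReal (φ y k))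
        ≤ ∫⁻ y in ball x r, ENNReal.ofReal (φ y (lam⁻¹.toReal)) :=
          lintegral_mono (fun y => ENNReal.ofReal_le_ofReal (hmon y))
    _ ≤ 1 := hlamint
  have hfatou := lintegral_liminf_le (u := atTop)
    (μ := volume.restrict (ball x r))
    (fun k : ℕ => ENNReal.measurable_ofReal.comp (hm (k:ℝ)))
  have hlim : ∀ y : EuclideanSpace ℝ (Fin n),
      liminf (fun k : ℕ => ENNReal.ofReal (φ y (k:ℝ))) atTop = ⊤ :=
    fun y => (ENNReal.tendsto_ofReal_atTop.comp ((htop y).comp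
      tendsto_natCast_atTop_atTop)).liminf_eq
  simp only [Function.comp_apply, Function.comp_def] at hfatou
  have htopint : (∫⁻ a in ball x r,
      liminf (fun k : ℕ => ENNReal.ofReal (φ a (k:ℝ))) atTop) = ⊤ := by
    rw [lintegral_congr hlim, setLIntegral_const, ENNReal.top_mul (vol_pos x hr).ne']
  rw [htopint] at hfatou
  have hle1 : liminf (fun k : ℕ =>
      ∫⁻ y in ball x r, ENNReal.ofReal (φ y (k:ℝ))) atTop ≤ 1 :=
    Filter.liminf_le_of_frequently_le' (Filter.Frequently.of_forall hseq)
  have : (⊤:ℝ≥0∞) ≤ 1 := le_trans hfatou hle1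
  simp at this

lemma lux_growth {φ : EuclideanSpace ℝ (Fin n) → ℝ → ℝ}
    (hm : ∀ t, Measurable fun y : EuclideanSpace ℝ (Fin n) => φ y t)
    (hpos : ∀ y t, 0 < t → 0 < φ y t)
    {q₀ p₀ : ℝ} (hq₀ : 1 ≤ q₀) (hA : UniformMuckenhoupt q₀ φ) (hp₀ : 0 < p₀)
    {Cp : ℝ} (hCp : 0 < Cp)
    (hlow : ∀ (x : EuclideanSpace ℝ (Fin n)) (s t : ℝ), 0 ≤ s → s ≤ 1 → 0 ≤ t →
      φ x (s * t) ≤ Cp * s ^ p₀ * φ x t)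
    (x₀ : EuclideanSpace ℝ (Fin n)) {δ : ℝ} (hδ : 0 < δ)
    {lam₀ : ℝ≥0∞} (hl0 : 0 < lam₀) (hlt : lam₀ ≠ ⊤)
    (hint : ∫⁻ y in ball x₀ δ, ENNReal.ofReal (φ y lam₀⁻¹.toReal) ≤ 1) :
    ∃ K : ℝ, 1 ≤ K ∧ ∀ i : ℕ,
      luxNorm φ (ball x₀ (2^i * δ)) ≤
        ENNReal.ofReal (K * ((2:ℝ) ^ ((n:ℝ)*q₀/p₀)) ^ i) * lam₀ := by
  obtain ⟨CA, hCA0, hCA⟩ := doubling hq₀ hA hm hpos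
  set a : ℝ := (n:ℝ)*q₀/p₀ with hadef
  have ha0 : 0 ≤ a := by positivity
  set c : ℝ := (2:ℝ) ^ a with hcdef
  have hc1 : 1 ≤ c := by
    rw [hcdef, ← Real.rpow_zero 2]
    exact Real.rpow_le_rpow_of_exponent_le one_le_two ha0
  have hc0 : 0 < c := lt_of_lt_of_le one_pos hc1
  set K : ℝ := max 1 ((Cp * CA) ^ (1/p₀)) with hKdef
  have hK1 : 1 ≤ K := le_max_left _ _
  have hK0 : 0 < K := lt_of_lt_of_le one_pos hK1
  have hKp : Cp * CA ≤ K ^ p₀ := by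
    have h1 : ((Cp * CA) ^ (1/p₀) : ℝ) ≤ K := le_max_right _ _
    have h2 := Real.rpow_le_rpow (by positivity) h1 hp₀.le
    rwa [← Real.rpow_mul (by positivity), one_div, inv_mul_cancel₀ hp₀.ne',
      Real.rpow_one] at h2
  refine ⟨K, hK1, fun i => ?_⟩
  set t₀ : ℝ := lam₀⁻¹.toReal with ht₀def
  have ht₀ : 0 < t₀ := by
    rw [ht₀def, ENNReal.toReal_inv]
    exact inv_pos.mpr (ENNReal.toReal_pos hl0.ne' hlt)
  have hci1 : (1:ℝ) ≤ c ^ i := one_le_pow₀ hc1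
  have hKci : (1:ℝ) ≤ K * c ^ i := by nlinarith
  have hKci0 : (0:ℝ) < K * c ^ i := by positivity
  set s : ℝ := (K * c ^ i)⁻¹ with hsdef
  have hs0 : 0 < s := inv_pos.mpr hKci0
  have hs1 : s ≤ 1 := by
    rw [hsdef]
    exact inv_le_one_of_one_le₀ hKci
  set Λ : ℝ≥0∞ := ENNReal.ofReal (K * c ^ i) * lam₀ with hΛdef
  have hΛtoReal : Λ⁻¹.toReal = s * t₀ := by
    rw [hΛdef, ENNReal.mul_inv (Or.inl (ENNReal.ofReal_pos.mpr hKci0).ne') (Or.inl ENNReal.ofReal_ne_top),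
      ENNReal.toReal_mul, ← ht₀def, hsdef, ENNReal.toReal_inv, ENNReal.toReal_ofReal hKci0.le]
  -- the key integral estimate
  have hR : δ ≤ 2 ^ i * δ := le_mul_of_one_le_left hδ.le (one_le_pow₀ one_le_two)
  have hRr : ((2:ℝ) ^ i * δ) / δ = 2 ^ i := by field_simp
  have hdoub := hCA t₀ ht₀ x₀ δ (2^i * δ) hδ hR
  rw [hRr] at hdoub
  -- real exponent arithmetic
  set X : ℝ := (2:ℝ) ^ ((i:ℝ) * ((n:ℝ)*q₀)) with hXdef
  have hX0 : 0 < X := Real.rpow_pos_of_pos two_pos _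
  have hXpow : ((2:ℝ)^i) ^ ((n:ℝ)*q₀) = X := by
    rw [hXdef, ← Real.rpow_natCast 2 i, ← Real.rpow_mul (by norm_num)]
  have hcX : ((c:ℝ)^i) ^ p₀ = X := by
    have h1 : (c:ℝ)^i = 2 ^ (a * i) := by
      rw [← Real.rpow_natCast c i, hcdef, ← Real.rpow_mul (by norm_num : (0:ℝ) ≤ 2)]
    rw [h1, ← Real.rpow_mul (by norm_num : (0:ℝ) ≤ 2), hXdef]
    congr 1
    rw [hadef]
    field_simp
  have hsp : s ^ p₀ = (K ^ p₀ * X)⁻¹ := by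
    rw [hsdef, Real.inv_rpow hKci0.le, Real.mul_rpow hK0.le (by positivity), hcX]
  have hreal : Cp * s ^ p₀ * (CA * ((2:ℝ)^i) ^ ((n:ℝ)*q₀)) ≤ 1 := by
    rw [hsp, hXpow]
    have hKp0 : (0:ℝ) < K ^ p₀ := Real.rpow_pos_of_pos hK0 _
    have heq : Cp * (K ^ p₀ * X)⁻¹ * (CA * X) = (Cp * CA) / K ^ p₀ := by
      field_simp
    rw [heq, div_le_one hKp0]
    exact hKp
  -- membership in the defining set of the Luxembourg norm
  have hmem : Λ ∈ {lam : ℝ≥0∞ | 0 < lam ∧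
      ∫⁻ y in ball x₀ (2^i * δ), ENNReal.ofReal (φ y lam⁻¹.toReal) ≤ 1} := by
    constructor
    · rw [hΛdef]
      exact ENNReal.mul_pos (ENNReal.ofReal_pos.mpr hKci0).ne' hl0.ne'
    · rw [hΛtoReal]
      calc ∫⁻ y in ball x₀ (2^i * δ), ENNReal.ofReal (φ y (s * t₀))
          ≤ ∫⁻ y in ball x₀ (2^i * δ), ENNReal.ofReal (Cp * s ^ p₀) * ENNReal.ofReal (φ y t₀) := by
            refine lintegral_mono fun y => ?_
            exact le_trans (ENNReal.ofReal_le_ofReal (hlow y s t₀ hs0.le hs1 ht₀.le))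
              (le_of_eq (ENNReal.ofReal_mul (by positivity)))
      _ = ENNReal.ofReal (Cp * s ^ p₀) * ∫⁻ y in ball x₀ (2^i * δ), ENNReal.ofReal (φ y t₀) :=
            lintegral_const_mul' _ _ ENNReal.ofReal_ne_top
      _ ≤ ENNReal.ofReal (Cp * s ^ p₀) *
            (ENNReal.ofReal (CA * ((2:ℝ)^i) ^ ((n:ℝ)*q₀)) * ∫⁻ y in ball x₀ δ, ENNReal.ofReal (φ y t₀)) :=
            mul_le_mul_right hdoub _
      _ ≤ ENNReal.ofReal (Cp * s ^ p₀) * (ENNReal.ofReal (CA * ((2:ℝ)^i) ^ ((n:ℝ)*q₀)) * 1) := by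
            refine mul_le_mul_right (mul_le_mul_right ?_ _) _
            rw [ht₀def]
            exact hint
      _ = ENNReal.ofReal (Cp * s ^ p₀ * (CA * ((2:ℝ)^i) ^ ((n:ℝ)*q₀))) := by
            rw [mul_one, ← ENNReal.ofReal_mul (by positivity)]
      _ ≤ 1 := by
            rw [← ENNReal.ofReal_one]
            exact ENNReal.ofReal_le_ofReal hreal
  calc luxNorm φ (ball x₀ (2^i * δ)) ≤ Λ := sInf_le hmem
  _ = ENNReal.ofReal (K * ((2:ℝ) ^ ((n:ℝ)*q₀/p₀)) ^ i) * lam₀ := by rw [hΛdef, hcdef, hadef]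

lemma integrable_absSub {f : EuclideanSpace ℝ (Fin n) → ℝ} (hf : LocallyIntegrable f volume)
    (c : EuclideanSpace ℝ (Fin n)) (r : ℝ) (m : ℝ) :
    IntegrableOn (fun x => |f x - m|) (ball c r) volume :=
  (((hf.integrableOn_isCompact (isCompact_closedBall c r)).mono_set
      ball_subset_closedBall).sub
    (integrableOn_const measure_ball_lt_top.ne)).abs

lemma avg_diff {f : EuclideanSpace ℝ (Fin n) → ℝ} (hf : LocallyIntegrable f volume)
    (x₀ : EuclideanSpace ℝ (Fin n)) {r R : ℝ} (hr : 0 < r) (hrR : r ≤ R) :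
    |ballAvg f x₀ R - ballAvg f x₀ r| ≤
      (volume (ball x₀ r)).toReal⁻¹ * ∫ y in ball x₀ R, |f y - ballAvg f x₀ R| := by
  set A := ballAvg f x₀ R with hA
  set Vr := (volume (ball x₀ r)).toReal with hVr
  have hVr0 : 0 < Vr := ENNReal.toReal_pos (vol_pos x₀ hr).ne' (vol_ne_top x₀ r)
  have hfint : IntegrableOn f (ball x₀ r) volume :=
    (hf.integrableOn_isCompact (isCompact_closedBall x₀ r)).mono_set ball_subset_closedBall
  have hAint : IntegrableOn (fun _ => A) (ball x₀ r) volume :=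
    integrableOn_const measure_ball_lt_top.ne
  have hconst : A = Vr⁻¹ * ∫ _ in ball x₀ r, A := by
    rw [setIntegral_const, measureReal_def, ← hVr, smul_eq_mul, ← mul_assoc, inv_mul_cancel₀ hVr0.ne', one_mul]
  have hsub : A - ballAvg f x₀ r = Vr⁻¹ * ∫ y in ball x₀ r, (A - f y) := by
    rw [integral_sub hAint hfint]
    rw [ballAvg]
    conv_lhs => rw [hconst]
    rw [← hVr]
    ring
  rw [hsub, abs_mul, abs_of_nonneg (inv_nonneg.mpr hVr0.le)]
  refine mul_le_mul_of_nonneg_left ?_ (inv_nonneg.mpr hVr0.le)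
  calc |∫ y in ball x₀ r, (A - f y)| ≤ ∫ y in ball x₀ r, |A - f y| := by
        simpa [Real.norm_eq_abs] using
          norm_integral_le_integral_norm (μ := volume.restrict (ball x₀ r)) (fun y => A - f y)
  _ = ∫ y in ball x₀ r, |f y - A| := by
        refine integral_congr_ae (Filter.Eventually.of_forall fun y => abs_sub_comm _ _)
  _ ≤ ∫ y in ball x₀ R, |f y - A| := by
        refine setIntegral_mono_set (integrable_absSub hf x₀ R A)
          (Filter.Eventually.of_forall fun y => abs_nonneg _)
          (HasSubset.Subset.eventuallyLE (ball_subset_ball hrR))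

lemma telescope {f : EuclideanSpace ℝ (Fin n) → ℝ} (hf : LocallyIntegrable f volume)
    (x₀ : EuclideanSpace ℝ (Fin n)) {δ : ℝ} (hδ : 0 < δ)
    {c W : ℝ} (hc : (2:ℝ)^n ≤ c) (hW : 0 ≤ W)
    (hI : ∀ i : ℕ, (∫ x in ball x₀ (2^i*δ), |f x - ballAvg f x₀ (2^i*δ)|) ≤ W * c^i) :
    ∀ i : ℕ, (∫ x in ball x₀ (2^i*δ), |f x - ballAvg f x₀ δ|) ≤ 2^n * (i+1) * W * c^i := by
  have h2n : (0:ℝ) < 2^n := by positivity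
  have hc0 : (0:ℝ) < c := lt_of_lt_of_le h2n hc
  set m : ℕ → ℝ := fun i => ballAvg f x₀ (2^i*δ) with hm
  set V : ℕ → ℝ := fun i => (volume (ball x₀ (2^i*δ))).toReal with hV
  have hri : ∀ i : ℕ, (0:ℝ) < 2^i*δ := fun i => by positivity
  have hV0 : ∀ i, 0 < V i := fun i =>
    ENNReal.toReal_pos (vol_pos x₀ (hri i)).ne' (vol_ne_top _ _)
  have hVsucc : ∀ i, V (i+1) = 2^n * V i := by
    intro i
    have h1 : (2:ℝ)^(i+1)*δ = 2 * (2^i * δ) := by ring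
    rw [hV]
    simp only
    rw [h1, ball_scale x₀ (hri i) two_pos, ENNReal.toReal_mul,
      ENNReal.toReal_ofReal (by positivity)]
  have hm0 : m 0 = ballAvg f x₀ δ := by
    rw [hm]; simp only; norm_num
  have hD : ∀ i : ℕ, |m (i+1) - m i| ≤ (V i)⁻¹ * (W * c^(i+1)) := by
    intro i
    have hle : (2:ℝ)^i*δ ≤ 2^(i+1)*δ := by
      have h2 : (2:ℝ)^i ≤ 2^(i+1) := pow_le_pow_right₀ one_le_two (Nat.le_succ i)
      nlinarith
    calc |m (i+1) - m i| ≤ (V i)⁻¹ * ∫ y in ball x₀ (2^(i+1)*δ), |f y - m (i+1)| :=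
          avg_diff hf x₀ (hri i) hle
    _ ≤ (V i)⁻¹ * (W * c^(i+1)) :=
          mul_le_mul_of_nonneg_left (hI (i+1)) (inv_nonneg.mpr (hV0 i).le)
  have hM : ∀ i : ℕ, V i * |m i - m 0| ≤ i * (2^n * W * c^i) := by
    intro i
    induction i with
    | zero => simp
    | succ i ih =>
      have htri : |m (i+1) - m 0| ≤ |m (i+1) - m i| + |m i - m 0| := by
        rw [← sub_add_sub_cancel (m (i+1)) (m i) (m 0)]
        exact abs_add_le _ _
      have e1 : V (i+1) * ((V i)⁻¹ * (W * c^(i+1))) = 2^n * (W * c^(i+1)) := by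
        rw [hVsucc i]
        field_simp [(hV0 i).ne']
      have l1 : V (i+1) * |m (i+1) - m i| ≤ 2^n * (W * c^(i+1)) := by
        rw [← e1]
        exact mul_le_mul_of_nonneg_left (hD i) (hV0 (i+1)).le
      have l2 : V (i+1) * |m i - m 0| ≤ (i:ℝ) * (2^n * W * c^(i+1)) := by
        rw [hVsucc i, mul_assoc]
        calc 2^n * (V i * |m i - m 0|) ≤ 2^n * ((i:ℝ) * (2^n*W*c^i)) :=
              mul_le_mul_of_nonneg_left ih h2n.le
        _ ≤ (i:ℝ) * (2^n * W * c^(i+1)) := by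
            have hkey : (2:ℝ)^n * (W * c^i) ≤ c * (W * c^i) :=
              mul_le_mul_of_nonneg_right hc (by positivity)
            have h3 := mul_le_mul_of_nonneg_left hkey
              (by positivity : (0:ℝ) ≤ (i:ℝ) * 2^n)
            calc (2:ℝ)^n * ((i:ℝ) * (2^n*W*c^i)) = (i:ℝ)*2^n * (2^n * (W * c^i)) := by ring
            _ ≤ (i:ℝ)*2^n * (c * (W * c^i)) := h3
            _ = (i:ℝ) * (2^n * W * c^(i+1)) := by ring
      calc V (i+1) * |m (i+1) - m 0| ≤ V (i+1) * (|m (i+1) - m i| + |m i - m 0|) :=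
            mul_le_mul_of_nonneg_left htri (hV0 (i+1)).le
      _ = V (i+1) * |m (i+1) - m i| + V (i+1) * |m i - m 0| := by ring
      _ ≤ 2^n * (W * c^(i+1)) + (i:ℝ) * (2^n * W * c^(i+1)) := add_le_add l1 l2
      _ = ((i+1 : ℕ) : ℝ) * (2^n * W * c^(i+1)) := by push_cast; ring
  intro i
  have hint1 : IntegrableOn (fun x => |f x - m i|) (ball x₀ (2^i*δ)) volume :=
    integrable_absSub hf x₀ _ _
  have hint2 : IntegrableOn (fun _ => |m i - m 0|) (ball x₀ (2^i*δ)) volume :=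
    integrableOn_const measure_ball_lt_top.ne
  have h1n : (1:ℝ) ≤ 2^n := one_le_pow₀ one_le_two
  calc (∫ x in ball x₀ (2^i*δ), |f x - ballAvg f x₀ δ|)
      = ∫ x in ball x₀ (2^i*δ), |f x - m 0| := by rw [hm0]
  _ ≤ ∫ x in ball x₀ (2^i*δ), (|f x - m i| + |m i - m 0|) := by
      refine integral_mono (integrable_absSub hf x₀ _ _) (hint1.add hint2) fun x => ?_
      rw [← sub_add_sub_cancel (f x) (m i) (m 0)]
      exact abs_add_le _ _
  _ = (∫ x in ball x₀ (2^i*δ), |f x - m i|) + (V i) * |m i - m 0| := by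
      rw [integral_add hint1 hint2, setIntegral_const, smul_eq_mul, measureReal_def]
  _ ≤ W * c^i + i * (2^n * W * c^i) := add_le_add (hI i) (hM i)
  _ ≤ 2^n * (i+1) * W * c^i := by
      nlinarith [mul_nonneg (sub_nonneg.mpr h1n) (mul_nonneg hW (pow_nonneg hc0.le i)),
        mul_nonneg (mul_nonneg (Nat.cast_nonneg i : (0:ℝ) ≤ i)
          (sub_nonneg.mpr h1n)) (mul_nonneg hW (pow_nonneg hc0.le i))]

lemma piece_bound {f : EuclideanSpace ℝ (Fin n) → ℝ} (hf : LocallyIntegrable f volume)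
    (x₀ : EuclideanSpace ℝ (Fin n)) (m : ℝ) {SS : Set (EuclideanSpace ℝ (Fin n))}
    (hSSm : MeasurableSet SS) {R : ℝ} (hSS : SS ⊆ ball x₀ R)
    (D : EuclideanSpace ℝ (Fin n) → ℝ) {A P G : ℝ}
    (hA : 0 ≤ A) (hP : 0 < P) (hD : ∀ x ∈ SS, P ≤ D x)
    (hG : (∫ x in ball x₀ R, |f x - m|) ≤ G) :
    ∫⁻ x in SS, ENNReal.ofReal (A * |f x - m| / D x) ≤ ENNReal.ofReal (A / P * G) := by
  have hint : IntegrableOn (fun x => |f x - m|) (ball x₀ R) volume := integrable_absSub hf x₀ R m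
  calc ∫⁻ x in SS, ENNReal.ofReal (A * |f x - m| / D x)
      ≤ ∫⁻ x in SS, ENNReal.ofReal (A / P) * ENNReal.ofReal (|f x - m|) := by
        refine lintegral_mono_ae ?_
        filter_upwards [ae_restrict_mem hSSm] with x hx
        rw [← ENNReal.ofReal_mul (by positivity)]
        refine ENNReal.ofReal_le_ofReal ?_
        calc A * |f x - m| / D x ≤ A * |f x - m| / P := by
              apply div_le_div_of_nonneg_left (by positivity) hP (hD x hx)
        _ = A / P * |f x - m| := by ring
  _ = ENNReal.ofReal (A / P) * ∫⁻ x in SS, ENNReal.ofReal (|f x - m|) :=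
        lintegral_const_mul' _ _ ENNReal.ofReal_ne_top
  _ ≤ ENNReal.ofReal (A / P) * ∫⁻ x in ball x₀ R, ENNReal.ofReal (|f x - m|) :=
        mul_le_mul_right (lintegral_mono' (Measure.restrict_mono hSS le_rfl) le_rfl) _
  _ = ENNReal.ofReal (A / P) * ENNReal.ofReal (∫ x in ball x₀ R, |f x - m|) := by
        rw [ofReal_integral_eq_lintegral_ofReal hint
          (Filter.Eventually.of_forall fun x => abs_nonneg _)]
  _ ≤ ENNReal.ofReal (A / P) * ENNReal.ofReal G :=
        mul_le_mul_right (ENNReal.ofReal_le_ofReal hG) _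
  _ = ENNReal.ofReal (A / P * G) := (ENNReal.ofReal_mul (by positivity)).symm

lemma annuli_cover (x₀ : EuclideanSpace ℝ (Fin n)) {δ : ℝ} (hδ : 0 < δ) :
    (Set.univ : Set (EuclideanSpace ℝ (Fin n))) =
      ball x₀ δ ∪ ⋃ j : ℕ, (ball x₀ (2^(j+1)*δ) \ ball x₀ (2^j*δ)) := by
  classical
  refine Set.eq_of_subset_of_subset (fun x _ => ?_) (fun x _ => Set.mem_univ x)
  have hex : ∃ k : ℕ, x ∈ ball x₀ (2^k*δ) := by
    obtain ⟨k, hk⟩ := pow_unbounded_of_one_lt (dist x x₀ / δ) one_lt_two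
    exact ⟨k, by rw [mem_ball]; rw [div_lt_iff₀ hδ] at hk; linarith⟩
  cases hk : Nat.find hex with
  | zero =>
    left
    have hmem := Nat.find_spec hex
    rw [hk] at hmem
    simpa using hmem
  | succ j =>
    right
    have hmem := Nat.find_spec hex
    rw [hk] at hmem
    refine Set.mem_iUnion.mpr ⟨j, hmem, ?_⟩
    exact Nat.find_min hex (by rw [hk]; omega)

lemma degenerate {φ : EuclideanSpace ℝ (Fin n) → ℝ → ℝ} {f : EuclideanSpace ℝ (Fin n) → ℝ}
    (hf : LocallyIntegrable f volume) {x₀ : EuclideanSpace ℝ (Fin n)} {δ : ℝ} (hδ : 0 < δ)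
    {N : ℝ} (hlux : luxNorm φ (ball x₀ δ) = ⊤)
    (hbmo : ∀ (c : EuclideanSpace ℝ (Fin n)) (r : ℝ), 0 < r →
      (∫ x in ball c r, |f x - ballAvg f c r|) ≤ N * (luxNorm φ (ball c r)).toReal) :
    ∀ᵐ x, f x = ballAvg f x₀ δ := by
  have hri : ∀ k : ℕ, (0:ℝ) < 2^k*δ := fun k => by positivity
  have hluxk : ∀ k : ℕ, luxNorm φ (ball x₀ (2^k*δ)) = ⊤ := by
    intro k
    refine top_le_iff.mp ?_
    rw [← hlux]
    exact lux_mono (ball_subset_ball (le_mul_of_one_le_left hδ.le (one_le_pow₀ one_le_two)))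
  have heq : ∀ k : ℕ, ∀ᵐ x ∂(volume.restrict (ball x₀ (2^k*δ))),
      f x = ballAvg f x₀ (2^k*δ) := by
    intro k
    have h0 : (∫ x in ball x₀ (2^k*δ), |f x - ballAvg f x₀ (2^k*δ)|) = 0 := by
      refine le_antisymm ?_ (integral_nonneg fun x => abs_nonneg _)
      have := hbmo x₀ (2^k*δ) (hri k)
      rwa [hluxk k, ENNReal.toReal_top, mul_zero] at this
    have := (integral_eq_zero_iff_of_nonneg (fun x => abs_nonneg _)
      (integrable_absSub hf x₀ _ _)).mp h0
    filter_upwards [this] with x hx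
    have : |f x - ballAvg f x₀ (2^k*δ)| = 0 := hx
    have := abs_eq_zero.mp this
    linarith [this]
  -- the averages all agree with ballAvg f x₀ δ
  have hδball : ball x₀ δ = ball x₀ (2^0*δ) := by norm_num
  have hres_ne : volume.restrict (ball x₀ δ) ≠ 0 := by
    rw [Ne, Measure.restrict_eq_zero]
    exact (vol_pos x₀ hδ).ne'
  have havg : ∀ k : ℕ, ballAvg f x₀ (2^k*δ) = ballAvg f x₀ δ := by
    intro k
    have h1 : ∀ᵐ x ∂(volume.restrict (ball x₀ δ)), f x = ballAvg f x₀ (2^k*δ) := by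
      refine Filter.Eventually.filter_mono (ae_mono (Measure.restrict_mono ?_ le_rfl)) (heq k)
      exact ball_subset_ball (le_mul_of_one_le_left hδ.le (one_le_pow₀ one_le_two))
    have h2 : ∀ᵐ x ∂(volume.restrict (ball x₀ δ)), f x = ballAvg f x₀ δ := by
      have := heq 0
      rw [← hδball] at this
      convert this using 2
      norm_num
    haveI : (ae (volume.restrict (ball x₀ δ))).NeBot := ae_neBot.mpr hres_ne
    obtain ⟨x, hx1, hx2⟩ := (h1.and h2).exists
    rw [← hx1, hx2]
  have hglob : ∀ᵐ x, ∀ k : ℕ, x ∈ ball x₀ (2^k*δ) → f x = ballAvg f x₀ δ := by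
    rw [ae_all_iff]
    intro k
    refine ae_imp_of_ae_restrict ?_
    filter_upwards [heq k] with x hx
    rw [hx, havg k]
  filter_upwards [hglob] with x hx
  obtain ⟨k, hk⟩ : ∃ k : ℕ, x ∈ ball x₀ (2^k*δ) := by
    obtain ⟨k, hk⟩ := pow_unbounded_of_one_lt (dist x x₀ / δ) one_lt_two
    exact ⟨k, by rw [mem_ball]; rw [div_lt_iff₀ hδ] at hk; linarith⟩
  exact hx k hk

end Stmt18

open Stmt18 in
/-- for `ε > n(q(φ)/i(φ) − 1)` and a ball `B₀ = B(x₀,δ)`, every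
`f ∈ BMO_φ(ℝⁿ)` (with `BMO_φ` norm at most `N`) satisfies
`∫ δ^ε |f(x)−f_{B₀}| / (δ^{n+ε} + |x−x₀|^{n+ε}) dx ≤ C (‖χ_{B₀}‖_{L^φ}/|B₀|) N`. -/
theorem stmt_18 {n : ℕ} (φ : EuclideanSpace ℝ (Fin n) → ℝ → ℝ)
    (hφ : IsGrowthFunction φ)
    (ε : ℝ) (hε : (n : ℝ) * (qIndex φ / iIndex φ - 1) < ε)
    (x₀ : EuclideanSpace ℝ (Fin n)) (δ : ℝ) (hδ : 0 < δ) :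
    ∃ C : ℝ, 0 < C ∧
      ∀ (f : EuclideanSpace ℝ (Fin n) → ℝ) (N : ℝ), LocallyIntegrable f volume → 0 < N →
        (∀ (c : EuclideanSpace ℝ (Fin n)) (r : ℝ), 0 < r →
          (∫ x in ball c r, |f x - ballAvg f c r|) ≤ N * (luxNorm φ (ball c r)).toReal) →
        ∫⁻ x, ENNReal.ofReal (δ ^ ε * |f x - ballAvg f x₀ δ| /
            (δ ^ ((n : ℝ) + ε) + ‖x - x₀‖ ^ ((n : ℝ) + ε))) ≤
          ENNReal.ofReal (C * (luxNorm φ (ball x₀ δ)).toReal /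
            (volume (ball x₀ δ)).toReal * N) := by
  classical
  obtain ⟨hε0, q₀, p₀, hq₀1, hq₀A, hp₀0, hp₀1, hp₀low, hqp⟩ := Stmt18.choose_exponents hφ hε
  obtain ⟨hmono, hzero, hpos, htop, hmeas, -, hup, -⟩ := hφ
  obtain ⟨Cp, hCp0, hlow⟩ := hp₀low
  set a : ℝ := (n:ℝ)*q₀/p₀ with hadef
  have ha0 : 0 ≤ a := by positivity
  set c : ℝ := (2:ℝ) ^ a with hcdef
  have hc0 : (0:ℝ) < c := Real.rpow_pos_of_pos two_pos _
  have hna : (n:ℝ) ≤ a := by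
    rw [hadef, le_div_iff₀ hp₀0]
    nlinarith [Nat.cast_nonneg (α := ℝ) n]
  have h2nc : (2:ℝ)^n ≤ c := by
    rw [hcdef, ← Real.rpow_natCast 2 n]
    exact Real.rpow_le_rpow_of_exponent_le one_le_two hna
  have hc1 : (1:ℝ) ≤ c := le_trans (one_le_pow₀ one_le_two) h2nc
  set d : ℝ := (2:ℝ) ^ ((n:ℝ) + ε) with hddef
  have hd0 : (0:ℝ) < d := Real.rpow_pos_of_pos two_pos _
  have hcd : c < d := by
    rw [hcdef, hddef]
    exact Real.rpow_lt_rpow_of_exponent_lt one_lt_two hqp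
  set ρ : ℝ := c / d with hρdef
  have hρ0 : 0 < ρ := div_pos hc0 hd0
  have hρ1 : ρ < 1 := (div_lt_one hd0).mpr hcd
  have hsum : Summable (fun j : ℕ => ((j:ℝ)+2) * ρ^j) := by
    have h1 := summable_pow_mul_geometric_of_norm_lt_one (R := ℝ) 1
      (r := ρ) (by rw [Real.norm_eq_abs, abs_of_pos hρ0]; exact hρ1)
    have h2 : Summable (fun j : ℕ => (2:ℝ) * ρ^j) :=
      (summable_geometric_of_lt_one hρ0.le hρ1).mul_left 2
    refine (h1.add h2).congr fun j => ?_
    push_cast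
    ring
  set S : ℝ := ∑' j : ℕ, ((j:ℝ)+2) * ρ^j with hSdef
  have hS0 : 0 ≤ S := tsum_nonneg (fun j => by positivity)
  set V₀ : ℝ := (volume (ball x₀ δ)).toReal with hV₀def
  have hV₀0 : 0 < V₀ := ENNReal.toReal_pos (Stmt18.vol_pos x₀ hδ).ne' (Stmt18.vol_ne_top x₀ δ)
  have hδε : (0:ℝ) < δ ^ ε := Real.rpow_pos_of_pos hδ _
  have hδnε : (0:ℝ) < δ ^ ((n:ℝ) + ε) := Real.rpow_pos_of_pos hδ _
  set θ : ℝ := δ^ε / δ^((n:ℝ)+ε) with hθdef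
  have hθ0 : 0 < θ := div_pos hδε hδnε
  by_cases hdeg : luxNorm φ (ball x₀ δ) = ⊤
  · refine ⟨1, one_pos, fun f N hf hN hbmo => ?_⟩
    have hconst := Stmt18.degenerate hf hδ hdeg hbmo
    have hzero' : (∫⁻ x, ENNReal.ofReal (δ ^ ε * |f x - ballAvg f x₀ δ| /
        (δ ^ ((n : ℝ) + ε) + ‖x - x₀‖ ^ ((n : ℝ) + ε)))) = 0 := by
      rw [← lintegral_zero]
      refine lintegral_congr_ae ?_
      filter_upwards [hconst] with x hx
      rw [hx]
      simp
    rw [hzero']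
    exact bot_le
  · have hLpos : 0 < luxNorm φ (ball x₀ δ) := Stmt18.lux_pos hmono htop hmeas x₀ hδ
    have hlt2 : luxNorm φ (ball x₀ δ) < 2 * luxNorm φ (ball x₀ δ) := by
      conv_lhs => rw [← one_mul (luxNorm φ (ball x₀ δ))]
      exact (ENNReal.mul_lt_mul_iff_left hLpos.ne' hdeg).mpr one_lt_two
    rw [luxNorm] at hlt2
    obtain ⟨lam₀, ⟨hlam₀0, hlam₀int⟩, hlam₀lt⟩ := sInf_lt_iff.mp hlt2
    have hlam₀top : lam₀ ≠ ⊤ := ne_top_of_lt hlam₀lt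
    set L : ℝ := lam₀.toReal with hLdef
    have hL0 : 0 < L := ENNReal.toReal_pos hlam₀0.ne' hlam₀top
    have hL2 : L ≤ 2 * (luxNorm φ (ball x₀ δ)).toReal := by
      have h2top : (2 : ℝ≥0∞) * luxNorm φ (ball x₀ δ) ≠ ⊤ :=
        ENNReal.mul_ne_top (by norm_num) hdeg
      have h3 := ENNReal.toReal_mono h2top hlam₀lt.le
      rwa [ENNReal.toReal_mul, ENNReal.toReal_ofNat] at h3
    obtain ⟨K, hK1, hKbd⟩ := Stmt18.lux_growth hmeas hpos hq₀1 hq₀A hp₀0 hCp0 hlow x₀ hδ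
      hlam₀0 hlam₀top hlam₀int
    have hK0 : (0:ℝ) < K := lt_of_lt_of_le one_pos hK1
    refine ⟨V₀ * θ * (2*K*2^n) * (1 + c * S), by positivity, fun f N hf hN hbmo => ?_⟩
    set m : ℝ := ballAvg f x₀ δ with hmdef
    have hI : ∀ i : ℕ, (∫ x in ball x₀ (2^i*δ), |f x - ballAvg f x₀ (2^i*δ)|) ≤
        (N*(K*L)) * c^i := by
      intro i
      refine le_trans (hbmo x₀ (2^i*δ) (by positivity)) ?_
      have h1 := hKbd i
      have h2 := ENNReal.toReal_mono (ENNReal.mul_ne_top ENNReal.ofReal_ne_top hlam₀top) h1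
      rw [ENNReal.toReal_mul, ENNReal.toReal_ofReal (by positivity)] at h2
      calc N * (luxNorm φ (ball x₀ (2^i*δ))).toReal
          ≤ N * (K * ((2:ℝ)^((n:ℝ)*q₀/p₀))^i * lam₀.toReal) :=
            mul_le_mul_of_nonneg_left h2 hN.le
      _ = (N*(K*L)) * c^i := by rw [hcdef, hadef, hLdef]; ring
    have hG := Stmt18.telescope hf x₀ hδ h2nc (by positivity : (0:ℝ) ≤ N*(K*L)) hI
    set g : EuclideanSpace ℝ (Fin n) → ℝ≥0∞ := fun x => ENNReal.ofReal (δ ^ ε * |f x - m| /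
        (δ ^ ((n : ℝ) + ε) + ‖x - x₀‖ ^ ((n : ℝ) + ε))) with hgdef
    have hball0 : ball x₀ ((2:ℝ)^(0:ℕ)*δ) = ball x₀ δ := by norm_num
    have hpiece0 : (∫⁻ x in ball x₀ δ, g x) ≤ ENNReal.ofReal (θ * (2^n * (N*(K*L)))) := by
      have hsub0 : ball x₀ δ ⊆ ball x₀ ((2:ℝ)^(0:ℕ)*δ) := by
        rw [hball0]
      have hthis := Stmt18.piece_bound hf x₀ m measurableSet_ball
        (R := 2^(0:ℕ)*δ) hsub0
        (fun x => δ ^ ((n:ℝ)+ε) + ‖x - x₀‖ ^ ((n:ℝ)+ε))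
        (A := δ^ε) (P := δ^((n:ℝ)+ε)) hδε.le hδnε
        (fun x _ => le_add_of_nonneg_right (Real.rpow_nonneg (norm_nonneg _) _)) (hG 0)
      refine le_trans hthis (le_of_eq ?_)
      congr 1
      rw [hθdef]
      norm_num
    have hpieceS : ∀ j : ℕ, (∫⁻ x in (ball x₀ (2^(j+1)*δ) \ ball x₀ (2^j*δ)), g x) ≤
        ENNReal.ofReal ((θ * (2^n * (N*(K*L))) * c) * (((j:ℝ)+2) * ρ^j)) := by
      intro j
      have hdj : (0:ℝ) < δ^((n:ℝ)+ε) * d^j := by positivity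
      have hDlb : ∀ x ∈ (ball x₀ (2^(j+1)*δ) \ ball x₀ (2^j*δ)),
          δ^((n:ℝ)+ε) * d^j ≤ δ ^ ((n:ℝ)+ε) + ‖x - x₀‖ ^ ((n:ℝ)+ε) := by
        intro x hx
        have hdist : 2^j*δ ≤ dist x x₀ := by
          by_contra hlt
          exact hx.2 (mem_ball.mpr (lt_of_not_ge hlt))
        rw [dist_eq_norm] at hdist
        have hnorm : ((2:ℝ)^j*δ) ^ ((n:ℝ)+ε) ≤ ‖x - x₀‖ ^ ((n:ℝ)+ε) :=
          Real.rpow_le_rpow (by positivity) hdist (by positivity)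
        have hid : ((2:ℝ)^j*δ) ^ ((n:ℝ)+ε) = δ^((n:ℝ)+ε) * d^j := by
          rw [Real.mul_rpow (by positivity) hδ.le]
          rw [← Real.rpow_natCast 2 j, ← Real.rpow_mul (by norm_num : (0:ℝ) ≤ 2)]
          rw [hddef, ← Real.rpow_natCast ((2:ℝ)^((n:ℝ)+ε)) j,
            ← Real.rpow_mul (by norm_num : (0:ℝ) ≤ 2)]
          rw [mul_comm ((j:ℝ)) ((n:ℝ)+ε)]
          ring
        calc δ^((n:ℝ)+ε) * d^j = ((2:ℝ)^j*δ) ^ ((n:ℝ)+ε) := hid.symm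
        _ ≤ ‖x - x₀‖ ^ ((n:ℝ)+ε) := hnorm
        _ ≤ δ ^ ((n:ℝ)+ε) + ‖x - x₀‖ ^ ((n:ℝ)+ε) := le_add_of_nonneg_left hδnε.le
      have hthis := Stmt18.piece_bound hf x₀ m (measurableSet_ball.diff measurableSet_ball)
        (R := 2^(j+1)*δ) Set.diff_subset
        (fun x => δ ^ ((n:ℝ)+ε) + ‖x - x₀‖ ^ ((n:ℝ)+ε))
        (A := δ^ε) (P := δ^((n:ℝ)+ε) * d^j) hδε.le hdj hDlb (hG (j+1))
      refine le_trans hthis (le_of_eq ?_)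
      congr 1
      rw [hθdef, hρdef]
      have hdj0 : (d:ℝ)^j ≠ 0 := (pow_pos hd0 j).ne'
      push_cast
      field_simp
      have hdd : d ^ j * d⁻¹ ^ j = 1 := by rw [← mul_pow, mul_inv_cancel₀ hd0.ne', one_pow]
      linear_combination (-((j:ℝ) * c * c ^ j + c * c ^ j * 2)) * hdd
    calc (∫⁻ x, g x) = ∫⁻ x in Set.univ, g x := (setLIntegral_univ _).symm
    _ = ∫⁻ x in (ball x₀ δ ∪ ⋃ j : ℕ, (ball x₀ (2^(j+1)*δ) \ ball x₀ (2^j*δ))), g x := by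
        rw [← Stmt18.annuli_cover x₀ hδ]
    _ ≤ (∫⁻ x in ball x₀ δ, g x) +
        ∫⁻ x in (⋃ j : ℕ, (ball x₀ (2^(j+1)*δ) \ ball x₀ (2^j*δ))), g x :=
        lintegral_union_le _ _ _
    _ ≤ ENNReal.ofReal (θ * (2^n * (N*(K*L)))) +
        ∑' j : ℕ, ENNReal.ofReal ((θ * (2^n * (N*(K*L))) * c) * (((j:ℝ)+2) * ρ^j)) :=
        add_le_add hpiece0 (le_trans (lintegral_iUnion_le _ _) (ENNReal.tsum_le_tsum hpieceS))
    _ = ENNReal.ofReal (θ * (2^n * (N*(K*L)))) +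
        ENNReal.ofReal ((θ * (2^n * (N*(K*L))) * c) * S) := by
        congr 1
        rw [← ENNReal.ofReal_tsum_of_nonneg (fun j => by positivity) (hsum.mul_left _)]
        congr 1
        rw [tsum_mul_left, ← hSdef]
    _ = ENNReal.ofReal (θ * (2^n * (N*(K*L))) * (1 + c * S)) := by
        rw [← ENNReal.ofReal_add (by positivity) (by positivity)]
        congr 1
        ring
    _ ≤ ENNReal.ofReal (V₀ * θ * (2*K*2^n) * (1 + c * S) *
          (luxNorm φ (ball x₀ δ)).toReal / V₀ * N) := by
        refine ENNReal.ofReal_le_ofReal ?_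
        have hrhs : V₀ * θ * (2*K*2^n) * (1 + c * S) * (luxNorm φ (ball x₀ δ)).toReal / V₀ * N
            = (θ * (2^n * (N * K)) * (1 + c * S)) *
              (2 * (luxNorm φ (ball x₀ δ)).toReal) := by
          field_simp
        rw [hrhs]
        have hP : (0:ℝ) ≤ θ * (2^n * (N * K)) * (1 + c*S) := by positivity
        calc θ * (2^n * (N*(K*L))) * (1 + c * S)
            = (θ * (2^n * (N * K)) * (1 + c*S)) * L := by ring
        _ ≤ (θ * (2^n * (N * K)) * (1 + c*S)) * (2 * (luxNorm φ (ball x₀ δ)).toReal) :=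
            mul_le_mul_of_nonneg_left hL2 hP
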